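/- Let n ≥ 2 and let k be a non-zero integer. Then the Wada representation ρ^{(2)} : Bₙ → Aut(Fₙ) and the Wada representation ρ_k^{(1)} : Bₙ → Aut(Fₙ) are not equivalent. -/

import Mathlib

def braidRels (m : ℕ) : Set (FreeGroup (Fin m)) :=
  { r | (∃ i j : Fin m, (i : ℕ) + 1 = (j : ℕ) ∧
          r = FreeGroup.of i * FreeGroup.of j * FreeGroup.of i *
              (FreeGroup.of j * FreeGroup.of i * FreeGroup.of j)⁻¹) ∨
        (∃ i j : Fin m, (i : ℕ) + 2 ≤ (j : ℕ) ∧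
          r = FreeGroup.of i * FreeGroup.of j * (FreeGroup.of j * FreeGroup.of i)⁻¹) }

abbrev BraidGroup (m : ℕ) : Type := PresentedGroup (braidRels m)

def braidGen {m : ℕ} (i : Fin m) : BraidGroup m := PresentedGroup.of i

def idx0 {n : ℕ} (k : Fin (n - 1)) : Fin n := ⟨k.1, by have := k.2; omega⟩
def idx1 {n : ℕ} (k : Fin (n - 1)) : Fin n := ⟨k.1 + 1, by have := k.2; omega⟩


/-- Wada's representation of type (1) with parameter `h`:
`σ_k ↦ (x_k ↦ x_k^{-h} x_{k+1} x_k^h, x_{k+1} ↦ x_k)`. -/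
def IsWada1 {n : ℕ} (h : ℤ) (ρ : BraidGroup (n - 1) →* MulAut (FreeGroup (Fin n))) : Prop :=
  ∀ k : Fin (n - 1),
    ρ (braidGen k) (FreeGroup.of (idx0 k)) =
      (FreeGroup.of (idx0 k)) ^ (-h) * FreeGroup.of (idx1 k) * (FreeGroup.of (idx0 k)) ^ h ∧
    ρ (braidGen k) (FreeGroup.of (idx1 k)) = FreeGroup.of (idx0 k) ∧
    ∀ j : Fin n, j ≠ idx0 k → j ≠ idx1 k → ρ (braidGen k) (FreeGroup.of j) = FreeGroup.of j

/-- Wada's representation of type (2):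
`σ_k ↦ (x_k ↦ x_k x_{k+1}⁻¹ x_k, x_{k+1} ↦ x_k)`. -/
def IsWada2 {n : ℕ} (ρ : BraidGroup (n - 1) →* MulAut (FreeGroup (Fin n))) : Prop :=
  ∀ k : Fin (n - 1),
    ρ (braidGen k) (FreeGroup.of (idx0 k)) =
      FreeGroup.of (idx0 k) * (FreeGroup.of (idx1 k))⁻¹ * FreeGroup.of (idx0 k) ∧
    ρ (braidGen k) (FreeGroup.of (idx1 k)) = FreeGroup.of (idx0 k) ∧
    ∀ j : Fin n, j ≠ idx0 k → j ≠ idx1 k → ρ (braidGen k) (FreeGroup.of j) = FreeGroup.of j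

/-- Wada's representation of type (3):
`σ_k ↦ (x_k ↦ x_k² x_{k+1}, x_{k+1} ↦ x_{k+1}⁻¹ x_k⁻¹ x_{k+1})`. -/
def IsWada3 {n : ℕ} (ρ : BraidGroup (n - 1) →* MulAut (FreeGroup (Fin n))) : Prop :=
  ∀ k : Fin (n - 1),
    ρ (braidGen k) (FreeGroup.of (idx0 k)) =
      FreeGroup.of (idx0 k) ^ 2 * FreeGroup.of (idx1 k) ∧
    ρ (braidGen k) (FreeGroup.of (idx1 k)) =
      (FreeGroup.of (idx1 k))⁻¹ * (FreeGroup.of (idx0 k))⁻¹ * FreeGroup.of (idx1 k) ∧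
    ∀ j : Fin n, j ≠ idx0 k → j ≠ idx1 k → ρ (braidGen k) (FreeGroup.of j) = FreeGroup.of j

/-- Two representations `ρ, ρ' : B → Aut G` are equivalent if there are automorphisms
`φ : G → G` and `μ : B → B` with `ρ'(μ(β)) = φ⁻¹ ∘ ρ(β) ∘ φ` for all `β`. -/
def EquivReps {B G : Type*} [Group B] [Group G] (ρ ρ' : B →* MulAut G) : Prop :=
  ∃ (φ : G ≃* G) (μ : B ≃* B), ∀ (β : B) (g : G), ρ' (μ β) g = φ.symm (ρ β (φ g))


open FreeGroup

variable {n : ℕ}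

/-- exponent-sum of generator `j` as a hom to `Multiplicative ℤ`. -/
def expHom (j : Fin n) : FreeGroup (Fin n) →* Multiplicative ℤ :=
  FreeGroup.lift (fun i => Multiplicative.ofAdd (if i = j then 1 else 0))

def expc (j : Fin n) (w : FreeGroup (Fin n)) : ℤ := Multiplicative.toAdd (expHom j w)

@[simp] lemma expc_of (j i : Fin n) : expc j (FreeGroup.of i) = if i = j then 1 else 0 := by
  simp [expc, expHom]

@[simp] lemma expc_one (j : Fin n) : expc j (1 : FreeGroup (Fin n)) = 0 := by
  simp [expc]

@[simp] lemma expc_mul (j : Fin n) (a b : FreeGroup (Fin n)) :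
    expc j (a * b) = expc j a + expc j b := by simp [expc]

@[simp] lemma expc_inv (j : Fin n) (a : FreeGroup (Fin n)) :
    expc j a⁻¹ = - expc j a := by simp [expc]

@[simp] lemma expc_zpow (j : Fin n) (a : FreeGroup (Fin n)) (m : ℤ) :
    expc j (a ^ m) = m * expc j a := by simp [expc]

def Emat (α : MulAut (FreeGroup (Fin n))) : Matrix (Fin n) (Fin n) ℤ :=
  Matrix.of fun i j => expc j (α (FreeGroup.of i))

lemma expc_mulaut (α : MulAut (FreeGroup (Fin n))) (j : Fin n) (w : FreeGroup (Fin n)) :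
    expc j (α w) = ∑ l, expc l w * Emat α l j := by
  induction w using FreeGroup.induction_on with
  | C1 => simp
  | of x =>
      show expc j (α (FreeGroup.of x)) = ∑ l, expc l (FreeGroup.of x) * Emat α l j
      simp [Emat, Finset.sum_ite_eq]
  | inv_of x ih =>
      show expc j (α (FreeGroup.of x)⁻¹) = ∑ l, expc l (FreeGroup.of x)⁻¹ * Emat α l j
      rw [_root_.map_inv, expc_inv]
      simp only [expc_inv, neg_mul, Finset.sum_neg_distrib]
      exact congrArg Neg.neg ih
  | mul x y ihx ihy =>
      rw [_root_.map_mul, expc_mul, ihx, ihy]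
      simp only [expc_mul, add_mul, Finset.sum_add_distrib]

lemma Emat_mul (α β : MulAut (FreeGroup (Fin n))) :
    Emat (α * β) = Emat β * Emat α := by
  ext i j
  have : (α * β) (FreeGroup.of i) = α (β (FreeGroup.of i)) := rfl
  simp [Emat, Matrix.mul_apply, this, expc_mulaut α j (β (FreeGroup.of i))]

lemma Emat_one : (Emat (1 : MulAut (FreeGroup (Fin n)))) = 1 := by
  ext i j
  simp [Emat, Matrix.one_apply]

def detE (α : MulAut (FreeGroup (Fin n))) : ℤ := (Emat α).det

lemma detE_mul (α β : MulAut (FreeGroup (Fin n))) : detE (α * β) = detE α * detE β := by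
  rw [detE, Emat_mul, Matrix.det_mul, mul_comm]; rfl

lemma detE_one : detE (1 : MulAut (FreeGroup (Fin n))) = 1 := by
  rw [detE, Emat_one, Matrix.det_one]

section Gen
variable {n : ℕ}

lemma idx0_lt_idx1 (l : Fin (n - 1)) : idx0 l < idx1 l := by
  simp [idx0, idx1, Fin.lt_def]

lemma idx0_ne_idx1 (l : Fin (n - 1)) : idx0 l ≠ idx1 l := ne_of_lt (idx0_lt_idx1 l)

def Smat (l : Fin (n - 1)) : Matrix (Fin n) (Fin n) ℤ :=
  (Equiv.swap (idx0 l) (idx1 l)).permMatrix ℤ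

lemma Smat_apply (l : Fin (n - 1)) (i j : Fin n) :
    Smat l i j = if j = Equiv.swap (idx0 l) (idx1 l) i then 1 else 0 := by
  simp [Smat, Equiv.Perm.permMatrix, PEquiv.toMatrix_apply, Equiv.toPEquiv_apply,
    Option.mem_def, eq_comm]

lemma det_Smat (l : Fin (n - 1)) : (Smat l).det = -1 := by
  rw [Smat, Matrix.det_permutation, Equiv.Perm.sign_swap (idx0_ne_idx1 l)]
  simp

def Lmat (l : Fin (n - 1)) : Matrix (Fin n) (Fin n) ℤ :=
  Matrix.of fun i j =>
    if i = idx0 l then (if j = idx0 l then -1 else if j = idx1 l then 2 else 0)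
    else (if i = j then 1 else 0)

lemma det_Lmat (l : Fin (n - 1)) : (Lmat l).det = -1 := by
  have htri : (Lmat l).BlockTriangular id := by
    intro i j hij
    simp only [id] at hij
    by_cases hi : i = idx0 l
    · have hj0 : j ≠ idx0 l := by rintro rfl; exact absurd rfl (ne_of_gt (hi ▸ hij))
      have hj1 : j ≠ idx1 l := by
        rintro rfl
        exact absurd (lt_trans (hi ▸ hij) (idx0_lt_idx1 l)) (lt_irrefl _)
      simp [Lmat, hi, hj0, hj1]
    · have : i ≠ j := fun h => absurd (h ▸ hij) (lt_irrefl _)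
      simp [Lmat, hi, this]
  rw [Matrix.det_of_upperTriangular htri]
  have : ∀ i : Fin n, Lmat l i i = if i = idx0 l then -1 else 1 := by
    intro i
    by_cases hi : i = idx0 l <;> simp [Lmat, hi]
  simp only [this]
  rw [Finset.prod_ite_eq' Finset.univ (idx0 l) (fun _ => (-1 : ℤ))]
  simp

lemma mul_Smat_apply (l : Fin (n - 1)) (M : Matrix (Fin n) (Fin n) ℤ) (i j : Fin n) :
    (M * Smat l) i j = M i (Equiv.swap (idx0 l) (idx1 l) j) := by
  rw [Matrix.mul_apply]
  have : ∀ m : Fin n, M i m * Smat l m j =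
      if m = Equiv.swap (idx0 l) (idx1 l) j then M i m else 0 := by
    intro m
    rw [Smat_apply]
    by_cases hm : m = Equiv.swap (idx0 l) (idx1 l) j
    · subst hm; simp
    · have : j ≠ Equiv.swap (idx0 l) (idx1 l) m := by
        intro h
        exact hm (by rw [h, Equiv.swap_apply_self])
      simp [this, hm]
  simp only [this]
  rw [Finset.sum_ite_eq' Finset.univ _ (fun m => M i m)]
  simp
end Gen

section Main
variable {n : ℕ}

lemma Emat_wada2 {ρ : BraidGroup (n - 1) →* MulAut (FreeGroup (Fin n))}
    (hρ : IsWada2 ρ) (l : Fin (n - 1)) :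
    Emat (ρ (braidGen l)) = Lmat l * Smat l := by
  have hne := idx0_ne_idx1 l
  ext i j
  rw [mul_Smat_apply l (Lmat l) i j]
  by_cases hi0 : i = idx0 l
  · subst hi0
    rw [show Emat (ρ (braidGen l)) (idx0 l) j = expc j (ρ (braidGen l) (FreeGroup.of (idx0 l)))
      from rfl, (hρ l).1]
    by_cases hj0 : j = idx0 l
    · subst hj0
      simp [Lmat, Equiv.swap_apply_left, hne, hne.symm]
    · by_cases hj1 : j = idx1 l
      · subst hj1
        simp [Lmat, Equiv.swap_apply_right, hne, hne.symm]
      · rw [Equiv.swap_apply_of_ne_of_ne hj0 hj1]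
        simp [Lmat, Ne.symm hj0, Ne.symm hj1, hj0, hj1]
  · by_cases hi1 : i = idx1 l
    · subst hi1
      rw [show Emat (ρ (braidGen l)) (idx1 l) j = expc j (ρ (braidGen l) (FreeGroup.of (idx1 l)))
        from rfl, (hρ l).2.1]
      by_cases hj0 : j = idx0 l
      · subst hj0
        simp [Lmat, Equiv.swap_apply_left, hne, hne.symm]
      · by_cases hj1 : j = idx1 l
        · subst hj1
          simp [Lmat, Equiv.swap_apply_right, hne, hne.symm]
        · rw [Equiv.swap_apply_of_ne_of_ne hj0 hj1]
          simp [Lmat, hi0, Ne.symm hj0, Ne.symm hj1, hj0, hj1]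
    · rw [show Emat (ρ (braidGen l)) i j = expc j (ρ (braidGen l) (FreeGroup.of i))
        from rfl, (hρ l).2.2 i hi0 hi1]
      by_cases hj0 : j = idx0 l
      · subst hj0
        simp [Lmat, Equiv.swap_apply_left, hi0, hi1, Ne.symm hi0, Ne.symm hi1]
      · by_cases hj1 : j = idx1 l
        · subst hj1
          simp [Lmat, Equiv.swap_apply_right, hi0, hi1, Ne.symm hi0, Ne.symm hi1]
        · rw [Equiv.swap_apply_of_ne_of_ne hj0 hj1]
          simp [Lmat, hi0]

lemma detE_wada2 {ρ : BraidGroup (n - 1) →* MulAut (FreeGroup (Fin n))}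
    (hρ : IsWada2 ρ) (l : Fin (n - 1)) : detE (ρ (braidGen l)) = 1 := by
  rw [detE, Emat_wada2 hρ l, Matrix.det_mul, det_Lmat, det_Smat]
  norm_num

lemma Emat_wada1 {m : ℤ} {ρ : BraidGroup (n - 1) →* MulAut (FreeGroup (Fin n))}
    (hρ : IsWada1 m ρ) (l : Fin (n - 1)) :
    Emat (ρ (braidGen l)) = Smat l := by
  have hne := idx0_ne_idx1 l
  ext i j
  rw [Smat_apply]
  by_cases hi0 : i = idx0 l
  · subst hi0
    rw [show Emat (ρ (braidGen l)) (idx0 l) j = expc j (ρ (braidGen l) (FreeGroup.of (idx0 l)))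
      from rfl, (hρ l).1, Equiv.swap_apply_left]
    by_cases hj1 : j = idx1 l
    · subst hj1
      simp [hne, hne.symm]
    · simp only [expc_mul, expc_zpow, expc_of]
      rw [if_neg hj1, if_neg (Ne.symm hj1)]
      split_ifs <;> ring
  · by_cases hi1 : i = idx1 l
    · subst hi1
      rw [show Emat (ρ (braidGen l)) (idx1 l) j = expc j (ρ (braidGen l) (FreeGroup.of (idx1 l)))
        from rfl, (hρ l).2.1, Equiv.swap_apply_right]
      by_cases hj0 : j = idx0 l
      · subst hj0; simp
      · simp [Ne.symm hj0, hj0]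
    · have hsw : Equiv.swap (idx0 l) (idx1 l) i = i := Equiv.swap_apply_of_ne_of_ne hi0 hi1
      rw [show Emat (ρ (braidGen l)) i j = expc j (ρ (braidGen l) (FreeGroup.of i))
        from rfl, (hρ l).2.2 i hi0 hi1, hsw]
      simp [eq_comm]

lemma detE_wada1 {m : ℤ} {ρ : BraidGroup (n - 1) →* MulAut (FreeGroup (Fin n))}
    (hρ : IsWada1 m ρ) (l : Fin (n - 1)) : detE (ρ (braidGen l)) = -1 := by
  rw [detE, Emat_wada1 hρ l, det_Smat]
end Main

section Final
variable {n : ℕ}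

def Du : MulAut (FreeGroup (Fin n)) →* ℤˣ where
  toFun α := ⟨detE α, detE α⁻¹,
    by rw [← detE_mul, mul_inv_cancel, detE_one],
    by rw [← detE_mul, inv_mul_cancel, detE_one]⟩
  map_one' := by ext; exact detE_one
  map_mul' α β := by ext; exact detE_mul α β
end Final

theorem wada2_not_equiv_wada1 (n : ℕ) (hn : 2 ≤ n) (k : ℤ) (hk : k ≠ 0)
    (ρ₂ ρk : BraidGroup (n - 1) →* MulAut (FreeGroup (Fin n)))
    (hρ₂ : IsWada2 ρ₂) (hρk : IsWada1 k ρk) :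
    ¬ EquivReps ρ₂ ρk := by
  
  rintro ⟨φ, μ, hequiv⟩
  -- det∘ρ₂ is trivial on all of the braid group
  have hall : ∀ γ : BraidGroup (n - 1), detE (ρ₂ γ) = 1 := by
    have hhom : Du.comp ρ₂ = 1 := by
      apply PresentedGroup.ext
      intro x
      apply Units.ext
      show detE (ρ₂ (braidGen x)) = ((1 : ℤˣ) : ℤ)
      rw [detE_wada2 hρ₂ x]; rfl
    intro γ
    have := DFunLike.congr_fun hhom γ
    exact congrArg Units.val this
  -- conjugation invariance
  have hφ1 : ((φ : MulAut (FreeGroup (Fin n))).symm * φ) = 1 := by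
    ext g
    show φ.symm (φ g) = g
    exact φ.symm_apply_apply g
  have hconj : ∀ γ : BraidGroup (n - 1), detE (ρk γ) = 1 := by
    intro γ
    have heq : ρk γ = (φ.symm : MulAut (FreeGroup (Fin n))) * (ρ₂ (μ.symm γ) * φ) := by
      ext g
      show ρk γ g = φ.symm (ρ₂ (μ.symm γ) (φ g))
      rw [← hequiv (μ.symm γ) g, MulEquiv.apply_symm_apply]
    rw [heq, detE_mul, detE_mul, hall (μ.symm γ)]
    have : detE ((φ : MulAut (FreeGroup (Fin n))).symm) * detE (φ : MulAut (FreeGroup (Fin n)))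
        = 1 := by rw [← detE_mul, hφ1, detE_one]
    linear_combination this
  -- but det of ρk on a generator is -1
  have hk0 : (0 : ℕ) < n - 1 := by omega
  have := detE_wada1 hρk ⟨0, hk0⟩
  rw [hconj] at this
  norm_num at this
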